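/- Let {e_n} be an orthonormal sequence in an infinite-dimensional real Hilbert space H and let A = {(1 − 1/n)·e_n : n ≥ 1}. Then the diameter of A equals √2, the Chebyshev center of A in H is 0, and r_H(A) = 1; hence A is an extremal set whose intersection with the unit sphere is empty. -/

import Mathlib

open scoped RealInnerProductSpace

noncomputable def chebRadius {H : Type*} [NormedAddCommGroup H] (A : Set H) : ℝ :=
  ⨅ y : H, ⨆ x : A, ‖(x : H) - y‖

theorem stmt14 {H : Type*} [NormedAddCommGroup H] [InnerProductSpace ℝ H] [CompleteSpace H] (e : ℕ → H)
    (he : Orthonormal ℝ e)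
    (A : Set H) (hA : A = (fun n : ℕ => (1 - 1 / (n : ℝ)) • e n) '' {n : ℕ | 1 ≤ n}) :
    Metric.diam A = Real.sqrt 2 ∧
      (⨆ x : A, ‖(x : H) - 0‖) = chebRadius A ∧
      chebRadius A = 1 ∧
      A ∩ Metric.sphere (0 : H) 1 = ∅ := by
  set a : ℕ → H := fun n => (1 - 1 / (n : ℝ)) • e n with ha
  -- basic facts
  have hfrac : ∀ n : ℕ, 1 ≤ n → 0 ≤ 1 - 1 / (n : ℝ) := by
    intro n hn
    have h1 : (1 : ℝ) ≤ n := by exact_mod_cast hn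
    have : 1 / (n:ℝ) ≤ 1 := by rw [div_le_one (by linarith)]; exact h1
    linarith
  have hfrac1 : ∀ n : ℕ, (1 : ℝ) - 1 / (n : ℝ) ≤ 1 := by
    intro n
    have : (0 : ℝ) ≤ 1 / (n : ℝ) := by positivity
    linarith
  have hnorm : ∀ n : ℕ, 1 ≤ n → ‖a n‖ = 1 - 1 / (n : ℝ) := by
    intro n hn
    rw [ha]
    simp only [norm_smul, Real.norm_eq_abs, he.1 n, mul_one]
    exact abs_of_nonneg (hfrac n hn)
  have h0A : (0 : H) ∈ A := by
    rw [hA]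
    exact ⟨1, by norm_num, by norm_num [ha]⟩
  haveI : Nonempty A := ⟨⟨0, h0A⟩⟩
  have hmemnorm : ∀ x ∈ A, ‖x‖ ≤ 1 := by
    intro x hx
    rw [hA] at hx
    obtain ⟨n, hn, rfl⟩ := hx
    rw [hnorm n hn]
    exact hfrac1 n
  -- inner products
  have hinner : ∀ m n : ℕ, m ≠ n → ⟪a m, a n⟫ = 0 := by
    intro m n hmn
    rw [ha]
    simp only [inner_smul_left, inner_smul_right, he.2 hmn]
    ring
  have hnormsq : ∀ m n : ℕ, 1 ≤ m → 1 ≤ n → m ≠ n →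
      ‖a m - a n‖ ^ 2 = (1 - 1 / (m : ℝ)) ^ 2 + (1 - 1 / (n : ℝ)) ^ 2 := by
    intro m n hm hn hmn
    rw [@norm_sub_sq_real, hinner m n hmn, hnorm m hm, hnorm n hn]
    ring
  -- tendsto fact
  have htend : Filter.Tendsto (fun n : ℕ => 1 - 1 / (n : ℝ)) Filter.atTop (nhds 1) := by
    have : Filter.Tendsto (fun n : ℕ => 1 / (n : ℝ)) Filter.atTop (nhds 0) :=
      tendsto_one_div_atTop_nhds_zero_nat
    have h := Filter.Tendsto.const_sub (1 : ℝ) this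
    simpa using h
  -- bounded A
  have hAbdd : Bornology.IsBounded A := by
    apply Metric.isBounded_closedBall (x := (0:H)) (r := 1) |>.subset
    intro x hx
    simpa using hmemnorm x hx
  -- sup norms bounded
  have hbddAbove : ∀ y : H, BddAbove (Set.range fun x : A => ‖(x : H) - y‖) := by
    intro y
    refine ⟨1 + ‖y‖, ?_⟩
    rintro r ⟨x, rfl⟩
    calc ‖(x : H) - y‖ ≤ ‖(x:H)‖ + ‖y‖ := norm_sub_le _ _
    _ ≤ 1 + ‖y‖ := by have := hmemnorm x x.2; linarith
  -- sup at 0 equals 1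
  have hS0 : (⨆ x : A, ‖(x : H) - 0‖) = 1 := by
    apply le_antisymm
    · apply ciSup_le
      intro x
      rw [sub_zero]
      exact hmemnorm x x.2
    · refine le_of_tendsto htend ?_
      filter_upwards [Filter.eventually_ge_atTop 1] with n h
      have hmem : a n ∈ A := by rw [hA]; exact ⟨n, h, rfl⟩
      have : ‖((⟨a n, hmem⟩ : A) : H) - 0‖ ≤ ⨆ x : A, ‖(x : H) - 0‖ :=
        le_ciSup (hbddAbove 0) _
      rw [sub_zero] at this
      simpa [hnorm n h] using this
  -- lower bound for every y
  have hlow : ∀ y : H, (1 : ℝ) ≤ ⨆ x : A, ‖(x : H) - y‖ := by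
    intro y
    set S := ⨆ x : A, ‖(x : H) - y‖ with hS
    have hS0' : 0 ≤ S := by
      have : ‖((⟨0, h0A⟩ : A) : H) - y‖ ≤ S := le_ciSup (hbddAbove y) _
      have h := norm_nonneg ((0:H) - y)
      linarith
    -- inner products go to zero
    have hsum : Summable fun n => ‖⟪e n, y⟫‖ ^ 2 := he.inner_products_summable y
    have hz2 : Filter.Tendsto (fun n => ‖⟪e n, y⟫‖ ^ 2) Filter.atTop (nhds 0) :=
      hsum.tendsto_atTop_zero
    have hz : Filter.Tendsto (fun n => ‖⟪e n, y⟫‖) Filter.atTop (nhds 0) := by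
      have := (Real.continuous_sqrt.tendsto 0).comp hz2
      simp only [Function.comp_def, Real.sqrt_zero] at this
      convert this using 2 with n
      rw [Real.sqrt_sq (norm_nonneg _)]
    have hlim : Filter.Tendsto
        (fun n : ℕ => (1 - 1 / (n : ℝ)) ^ 2 - 2 * ‖⟪e n, y⟫‖) Filter.atTop (nhds 1) := by
      have h1 : Filter.Tendsto (fun n : ℕ => (1 - 1 / (n : ℝ)) ^ 2) Filter.atTop (nhds 1) := by
        have := htend.pow 2
        simpa using this
      have := h1.sub ((hz.const_mul 2))
      simpa using this
    have hle : ∀ᶠ n : ℕ in Filter.atTop,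
        (1 - 1 / (n : ℝ)) ^ 2 - 2 * ‖⟪e n, y⟫‖ ≤ S ^ 2 := by
      filter_upwards [Filter.eventually_ge_atTop 1] with n hn
      have hmem : a n ∈ A := by rw [hA]; exact ⟨n, hn, rfl⟩
      have hSn : ‖a n - y‖ ≤ S := le_ciSup (hbddAbove y) (⟨a n, hmem⟩ : A)
      have hsq : ‖a n - y‖ ^ 2 ≤ S ^ 2 := by
        have := norm_nonneg (a n - y)
        nlinarith
      have hexp : ‖a n - y‖ ^ 2 = (1 - 1/(n:ℝ))^2 - 2 * ((1 - 1/(n:ℝ)) * ⟪e n, y⟫) + ‖y‖^2 := by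
        rw [@norm_sub_sq_real, hnorm n hn, ha]
        simp only [inner_smul_left, RCLike.conj_to_real]
      have hip : (1 - 1/(n:ℝ)) * ⟪e n, y⟫ ≤ ‖⟪e n, y⟫‖ := by
        have h1 : (1 - 1/(n:ℝ)) * ⟪e n, y⟫ ≤ |(1 - 1/(n:ℝ)) * ⟪e n, y⟫| := le_abs_self _
        have h2 : |(1 - 1/(n:ℝ)) * ⟪e n, y⟫| = (1 - 1/(n:ℝ)) * |⟪e n, y⟫| := by
          rw [abs_mul, abs_of_nonneg (hfrac n hn)]
        have h3 : (1 - 1/(n:ℝ)) * |⟪e n, y⟫| ≤ 1 * |⟪e n, y⟫| :=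
          mul_le_mul_of_nonneg_right (hfrac1 n) (abs_nonneg _)
        rw [Real.norm_eq_abs]
        linarith
      have hy2 : (0:ℝ) ≤ ‖y‖ ^ 2 := by positivity
      nlinarith [hsq, hexp, hip, hy2]
    have h1S : (1:ℝ) ≤ S ^ 2 := le_of_tendsto hlim hle
    nlinarith
  -- chebRadius = 1
  have hcheb : chebRadius A = 1 := by
    unfold chebRadius
    apply le_antisymm
    · have := ciInf_le (f := fun y : H => ⨆ x : A, ‖(x : H) - y‖)
        ⟨0, by rintro r ⟨y, rfl⟩; have := hlow y; dsimp; linarith⟩ (0 : H)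
      calc (⨅ y : H, ⨆ x : A, ‖(x : H) - y‖) ≤ ⨆ x : A, ‖(x : H) - (0:H)‖ := this
      _ = 1 := hS0
    · exact le_ciInf hlow
  refine ⟨?_, by rw [hS0, hcheb], hcheb, ?_⟩
  · -- diameter
    apply le_antisymm
    · apply Metric.diam_le_of_forall_dist_le (Real.sqrt_nonneg 2)
      intro x hx y hy
      rw [hA] at hx hy
      obtain ⟨m, hm, rfl⟩ := hx
      obtain ⟨n, hn, rfl⟩ := hy
      rcases eq_or_ne m n with rfl | hmn
      · simp [Real.sqrt_nonneg]
      · have : dist (a m) (a n) ^ 2 = (1 - 1/(m:ℝ))^2 + (1 - 1/(n:ℝ))^2 := by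
          rw [dist_eq_norm]; exact hnormsq m n hm hn hmn
        have h2 : dist (a m) (a n) ^ 2 ≤ 2 := by
          have h1 := hfrac m hm
          have h2 := hfrac1 m
          have h3 := hfrac n hn
          have h4 := hfrac1 n
          nlinarith
        have hd := dist_nonneg (x := a m) (y := a n)
        have hs := Real.sq_sqrt (by norm_num : (0:ℝ) ≤ 2)
        have hsn := Real.sqrt_nonneg 2
        nlinarith
    · -- lower bound on diam
      have hdn : ∀ n : ℕ, 1 ≤ n →
          Real.sqrt ((1 - 1/(n:ℝ))^2 + (1 - 1/((n+1:ℕ):ℝ))^2) ≤ Metric.diam A := by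
        intro n hn
        have hm1 : a n ∈ A := by rw [hA]; exact ⟨n, hn, rfl⟩
        have hm2 : a (n+1) ∈ A := by rw [hA]; exact ⟨n+1, Nat.succ_le_succ (Nat.zero_le n), rfl⟩
        have hd : dist (a n) (a (n+1)) ≤ Metric.diam A :=
          Metric.dist_le_diam_of_mem hAbdd hm1 hm2
        have hsq : dist (a n) (a (n+1)) ^ 2 = (1 - 1/(n:ℝ))^2 + (1 - 1/((n+1:ℕ):ℝ))^2 := by
          rw [dist_eq_norm]; exact hnormsq n (n+1) hn (by omega) (by omega)
        have : Real.sqrt ((1 - 1/(n:ℝ))^2 + (1 - 1/((n+1:ℕ):ℝ))^2) = dist (a n) (a (n+1)) := by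
          rw [← hsq, Real.sqrt_sq dist_nonneg]
        linarith [this ▸ hd]
      have hlim2 : Filter.Tendsto
          (fun n : ℕ => Real.sqrt ((1 - 1/(n:ℝ))^2 + (1 - 1/((n+1:ℕ):ℝ))^2))
          Filter.atTop (nhds (Real.sqrt 2)) := by
        apply (Real.continuous_sqrt.tendsto 2).comp
        have h1 : Filter.Tendsto (fun n : ℕ => (1 - 1/(n:ℝ))^2) Filter.atTop (nhds 1) := by
          have := htend.pow 2; simpa using this
        have h2 : Filter.Tendsto (fun n : ℕ => (1 - 1/((n+1:ℕ):ℝ))^2) Filter.atTop (nhds 1) := by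
          have := (htend.comp (Filter.tendsto_add_atTop_nat 1)).pow 2
          simpa [Function.comp_def] using this
        have := h1.add h2
        norm_num at this
        convert this using 2
        norm_num
      refine le_of_tendsto hlim2 ?_
      filter_upwards [Filter.eventually_ge_atTop 1] with n hn
      exact hdn n hn
  · -- empty intersection
    ext x
    simp only [Set.mem_inter_iff, Set.mem_empty_iff_false, iff_false, not_and]
    intro hx hs
    rw [hA] at hx
    obtain ⟨n, hn, rfl⟩ := hx
    rw [Metric.mem_sphere, dist_zero_right] at hs
    rw [hnorm n hn] at hs
    have : (1:ℝ) ≤ n := by exact_mod_cast hn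
    have : (0:ℝ) < 1 / n := by positivity
    linarith
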